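/- Let G be a finite connected simple graph and let c be a pebbling configuration on G whose support has size s and whose size N satisfies N ≥ π₂(G, s). Then for every vertex r of G, some finite sequence of pebbling moves starting from c places at least 2 + ⌊(N − π₂(G, s)) / π(G)⌋ pebbles on r. -/

import Mathlib

open SimpleGraph Finset

/-- A single pebbling move on `G`: remove two pebbles from a vertex `v` with at least two
pebbles and add one pebble to an adjacent vertex `w`. -/
def PebblingMove {V : Type*} (G : SimpleGraph V) (c c' : V → ℕ) : Prop :=
  ∃ v w, G.Adj v w ∧ 2 ≤ c v ∧ c' v = c v - 2 ∧ c' w = c w + 1 ∧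
    ∀ u, u ≠ v → u ≠ w → c' u = c u

/-- Some finite sequence of pebbling moves starting from `c` places at least `t` pebbles
on the vertex `r`. -/
def NSolvable {V : Type*} (G : SimpleGraph V) (c : V → ℕ) (r : V) (t : ℕ) : Prop :=
  ∃ c', Relation.ReflTransGen (PebblingMove G) c c' ∧ t ≤ c' r

/-- A configuration `c` is `r`-solvable. -/
def Solvable {V : Type*} (G : SimpleGraph V) (c : V → ℕ) (r : V) : Prop :=
  NSolvable G c r 1

/-- The pebbling number `π(G)`: least `k` such that every configuration of size `k` is
`r`-solvable for every root `r`. -/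
noncomputable def pebblingNumber {V : Type*} (G : SimpleGraph V) [Fintype V] : ℕ :=
  sInf {k | ∀ c : V → ℕ, (∑ v, c v) = k → ∀ r, Solvable G c r}

/-- The 2-pebbling number `π₂(G, s)`: least `m` such that for every root `r`, every
configuration of size at least `m` with support of size exactly `s` can place two pebbles
on `r`. -/
noncomputable def twoPebblingNumber {V : Type*} (G : SimpleGraph V) [Fintype V] (s : ℕ) : ℕ :=
  sInf {m | ∀ (r : V) (c : V → ℕ), m ≤ ∑ v, c v →
    (Finset.univ.filter fun v => 1 ≤ c v).card = s → NSolvable G c r 2}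

section Aux

variable {V : Type*} (G : SimpleGraph V)

lemma move_add (e : V → ℕ) {a b : V → ℕ} (h : PebblingMove G a b) :
    PebblingMove G (fun u => a u + e u) (fun u => b u + e u) := by
  obtain ⟨v, w, hadj, hv, hbv, hbw, hrest⟩ := h
  refine ⟨v, w, hadj, by simp; omega, by simp [hbv]; omega, by simp [hbw]; omega, ?_⟩
  intro u h1 h2
  simp [hrest u h1 h2]

lemma rtg_add (e : V → ℕ) {a b : V → ℕ}
    (h : Relation.ReflTransGen (PebblingMove G) a b) :
    Relation.ReflTransGen (PebblingMove G) (fun u => a u + e u) (fun u => b u + e u) := by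
  induction h with
  | refl => exact .refl
  | tail _ hbc ih => exact ih.tail (move_add G e hbc)

lemma nsolvable_add {a b : V → ℕ} {r : V} {t₁ t₂ : ℕ}
    (h1 : NSolvable G a r t₁) (h2 : NSolvable G b r t₂) :
    NSolvable G (fun u => a u + b u) r (t₁ + t₂) := by
  obtain ⟨a', ha, ha'⟩ := h1
  obtain ⟨b', hb, hb'⟩ := h2
  refine ⟨fun u => a' u + b' u, ?_, by show t₁ + t₂ ≤ a' r + b' r; omega⟩
  have s1 : Relation.ReflTransGen (PebblingMove G) (fun u => a u + b u)
      (fun u => a' u + b u) := rtg_add G b ha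
  have s2 : Relation.ReflTransGen (PebblingMove G) (fun u => b u + a' u)
      (fun u => b' u + a' u) := rtg_add G a' hb
  have e1 : (fun u => b u + a' u) = fun u => a' u + b u := by funext u; omega
  have e2 : (fun u => b' u + a' u) = fun u => a' u + b' u := by funext u; omega
  rw [e1, e2] at s2
  exact s1.trans s2

lemma move_many {v w : V} (hadj : G.Adj v w) :
    ∀ (k : ℕ) (c : V → ℕ), 2 * k ≤ c v →
      ∃ c', Relation.ReflTransGen (PebblingMove G) c c' ∧ c w + k ≤ c' w
  | 0, c, _ => ⟨c, .refl, le_rfl⟩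
  | (k + 1), c, h => by
    classical
    have hne : v ≠ w := hadj.ne
    set c₁ : V → ℕ := fun u => if u = v then c v - 2 else if u = w then c w + 1 else c u
      with hc₁
    have hmove : PebblingMove G c c₁ := by
      refine ⟨v, w, hadj, by omega, by simp [hc₁], by simp [hc₁, Ne.symm hne], ?_⟩
      intro u h1 h2
      simp [hc₁, h1, h2]
    have h2 : 2 * k ≤ c₁ v := by simp [hc₁]; omega
    obtain ⟨c', hrel, hw⟩ := move_many hadj k c₁ h2
    refine ⟨c', Relation.ReflTransGen.head hmove hrel, ?_⟩
    have : c₁ w = c w + 1 := by simp [hc₁, Ne.symm hne]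
    omega

lemma walk_solvable {v r : V} (p : G.Walk v r) :
    ∀ (t : ℕ) (c : V → ℕ), t * 2 ^ p.length ≤ c v → NSolvable G c r t := by
  induction p with
  | nil => exact fun t c h => ⟨c, .refl, by simpa using h⟩
  | @cons v w r hadj q ih =>
    intro t c h
    rw [Walk.length_cons] at h
    have hk : 2 * (t * 2 ^ q.length) ≤ c v := by
      have : t * 2 ^ (q.length + 1) = 2 * (t * 2 ^ q.length) := by ring
      omega
    obtain ⟨c₁, h1, hw⟩ := move_many G hadj (t * 2 ^ q.length) c hk
    obtain ⟨c₂, h2, hr⟩ := ih t c₁ (by omega)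
    exact ⟨c₂, h1.trans h2, hr⟩

lemma big_solvable [Fintype V] (hG : G.Connected) (t : ℕ) (c : V → ℕ) (r : V)
    (hsum : Fintype.card V * (t * 2 ^ Fintype.card V) + 1 ≤ ∑ u, c u) :
    NSolvable G c r t := by
  classical
  rcases Nat.eq_zero_or_pos t with rfl | ht
  · exact ⟨c, .refl, by omega⟩
  set n := Fintype.card V with hn
  set B := t * 2 ^ n with hB
  have hB1 : 1 ≤ B := Nat.mul_pos ht (Nat.pow_pos (by norm_num))
  have hvx : ∃ v, B ≤ c v := by
    by_contra hall
    push_neg at hall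
    have h1 : ∑ u, c u ≤ ∑ _u : V, (B - 1) :=
      Finset.sum_le_sum fun u _ => by have := hall u; omega
    rw [Finset.sum_const, Finset.card_univ, smul_eq_mul, ← hn] at h1
    have h2 : n * (B - 1) + n * 1 = n * B := by
      rw [← Nat.mul_add]; congr 1; omega
    omega
  obtain ⟨v, hv⟩ := hvx
  obtain ⟨p⟩ := hG.preconnected v r
  have hlen : (p.toPath : G.Walk v r).length < n := p.toPath.2.length_lt
  refine walk_solvable G (p.toPath : G.Walk v r) t c ?_
  calc t * 2 ^ (p.toPath : G.Walk v r).length ≤ t * 2 ^ n :=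
        Nat.mul_le_mul_left t (Nat.pow_le_pow_right (by norm_num) (le_of_lt hlen))
    _ ≤ c v := hv

lemma no_move {c c' : V → ℕ} (h : ∀ v, c v ≤ 1)
    (hrel : Relation.ReflTransGen (PebblingMove G) c c') : c' = c := by
  rcases Relation.ReflTransGen.cases_head hrel with rfl | ⟨b, hb, -⟩
  · rfl
  · obtain ⟨v, w, _, hv, _⟩ := hb
    exact absurd hv (by have := h v; omega)

lemma exists_sub [Fintype V] (d : V → ℕ) :
    ∀ k, k ≤ ∑ v, d v → ∃ e : V → ℕ, (∀ v, e v ≤ d v) ∧ ∑ v, e v = k := by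
  intro k
  induction k with
  | zero => exact fun _ => ⟨fun _ => 0, fun _ => Nat.zero_le _, by simp⟩
  | succ k ih =>
    classical
    intro hk
    obtain ⟨e, he, hsum⟩ := ih (by omega)
    have hvx : ∃ v, e v < d v := by
      by_contra hall
      push_neg at hall
      have : ∑ v, d v ≤ ∑ v, e v := Finset.sum_le_sum fun v _ => hall v
      omega
    obtain ⟨v, hv⟩ := hvx
    refine ⟨Function.update e v (e v + 1), ?_, ?_⟩
    · intro u
      rcases eq_or_ne u v with rfl | h
      · simp; omega
      · simp [Function.update_of_ne h, he u]
    · rw [Finset.sum_update_of_mem (Finset.mem_univ v)]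
      have h2 : ∑ u, e u = ∑ u ∈ Finset.univ \ {v}, e u + e v :=
        Finset.sum_eq_sum_sdiff_singleton_add (Finset.mem_univ v) e
      omega

lemma q_solvable [Fintype V]
    (hπ : ∀ c : V → ℕ, (∑ v, c v) = pebblingNumber G → ∀ r, Solvable G c r) :
    ∀ (q : ℕ) (e : V → ℕ) (r : V), (∑ v, e v) = q * pebblingNumber G →
      NSolvable G e r q := by
  intro q
  induction q with
  | zero => exact fun e r _ => ⟨e, .refl, Nat.zero_le _⟩
  | succ q ih =>
    intro e r hsum
    have hle : pebblingNumber G ≤ ∑ v, e v := by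
      rw [hsum]; nlinarith
    obtain ⟨e₁, he₁, hsum₁⟩ := exists_sub e (pebblingNumber G) hle
    set e₂ : V → ℕ := fun v => e v - e₁ v with he₂
    have hsplit : ∀ v, e₁ v + e₂ v = e v := fun v => by
      have := he₁ v; simp [he₂]; omega
    have hsum₂ : ∑ v, e₂ v = q * pebblingNumber G := by
      have h1 : ∑ v, (e₁ v + e₂ v) = ∑ v, e v :=
        Finset.sum_congr rfl fun v _ => hsplit v
      rw [Finset.sum_add_distrib] at h1
      have : (q + 1) * pebblingNumber G = q * pebblingNumber G + pebblingNumber G := by ring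
      omega
    have h1 : NSolvable G e₁ r 1 := hπ e₁ hsum₁ r
    have h2 : NSolvable G e₂ r q := ih e₂ r hsum₂
    have h3 := nsolvable_add G h1 h2
    have heq : (fun u => e₁ u + e₂ u) = e := funext hsplit
    rw [heq] at h3
    simpa [Nat.add_comm] using h3

end Aux

/-- a configuration of size `N ≥ π₂(G, s)` with support size `s` can place at
least `2 + ⌊(N - π₂(G, s)) / π(G)⌋` pebbles on any root `r`. -/
theorem stmt6 {V : Type*} [Fintype V] (G : SimpleGraph V) (hG : G.Connected)
    (c : V → ℕ) (s : ℕ)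
    (hs : (Finset.univ.filter fun v => 1 ≤ c v).card = s)
    (hN : twoPebblingNumber G s ≤ ∑ v, c v) (r : V) :
    NSolvable G c r (2 + ((∑ v, c v) - twoPebblingNumber G s) / pebblingNumber G) := by
  classical
  have hne : Nonempty V := hG.nonempty
  -- membership of the infima in their defining sets
  have hπset : {k | ∀ c : V → ℕ, (∑ v, c v) = k → ∀ r, Solvable G c r}.Nonempty :=
    ⟨Fintype.card V * (1 * 2 ^ Fintype.card V) + 1,
      fun c hc r => big_solvable G hG 1 c r (le_of_eq hc.symm)⟩
  have hπmem : ∀ c : V → ℕ, (∑ v, c v) = pebblingNumber G → ∀ r, Solvable G c r :=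
    Nat.sInf_mem hπset
  have hπ2set : {m | ∀ (r : V) (c : V → ℕ), m ≤ ∑ v, c v →
      (Finset.univ.filter fun v => 1 ≤ c v).card = s → NSolvable G c r 2}.Nonempty :=
    ⟨Fintype.card V * (2 * 2 ^ Fintype.card V) + 1,
      fun r c h _ => big_solvable G hG 2 c r h⟩
  have hπ2mem : ∀ (r : V) (c : V → ℕ), twoPebblingNumber G s ≤ ∑ v, c v →
      (Finset.univ.filter fun v => 1 ≤ c v).card = s → NSolvable G c r 2 :=
    Nat.sInf_mem hπ2set
  set N := ∑ v, c v with hNdef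
  set π := pebblingNumber G with hπdef
  set π₂ := twoPebblingNumber G s with hπ₂def
  -- π₂ > s
  have hπ2s : s < π₂ := by
    by_contra hle
    push_neg at hle
    set c₁ : V → ℕ := fun v => if 1 ≤ c v then 1 else 0 with hc₁
    have hsum1 : ∑ v, c₁ v = s := by
      rw [hc₁]
      rw [Finset.sum_boole]
      simpa using hs
    have hsuppeq : (Finset.univ.filter fun v => 1 ≤ c₁ v) =
        (Finset.univ.filter fun v => 1 ≤ c v) := by
      ext v
      simp only [Finset.mem_filter, Finset.mem_univ, true_and, hc₁]
      split_ifs with h <;> simp [h]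
    have hsupp1 : (Finset.univ.filter fun v => 1 ≤ c₁ v).card = s := by
      rw [hsuppeq]; exact hs
    obtain ⟨c', hrel, h2⟩ := hπ2mem (Classical.arbitrary V) c₁ (by omega) hsupp1
    have hfix := no_move G (fun v => by by_cases h : 1 ≤ c v <;> simp [hc₁, h]) hrel
    rw [hfix] at h2
    have hle1 : c₁ (Classical.arbitrary V) ≤ 1 := by
      by_cases h : 1 ≤ c (Classical.arbitrary V) <;> simp [hc₁, h]
    omega
  set q := (N - π₂) / π with hq
  have hqπ : q * π ≤ N - π₂ := Nat.div_mul_le_self _ _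
  -- sum of (c v - 1) equals N - s
  have key : ∑ v, (c v - 1) + s = N := by
    have h1 : N = ∑ v, ((c v - 1) + if 1 ≤ c v then 1 else 0) :=
      Finset.sum_congr rfl fun v _ => by split_ifs <;> omega
    rw [Finset.sum_add_distrib] at h1
    have h2 : ∑ v, (if 1 ≤ c v then 1 else 0) = s := by
      rw [Finset.sum_boole]
      simpa using hs
    omega
  have hqd : q * π ≤ ∑ v, (c v - 1) := by omega
  obtain ⟨e, he, hesum⟩ := exists_sub (fun v => c v - 1) (q * π) hqd
  have heC : ∀ v, e v ≤ c v := fun v => (he v).trans (Nat.sub_le _ _)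
  set c₀ : V → ℕ := fun v => c v - e v with hc₀
  have hsplit : ∀ v, c₀ v + e v = c v := fun v => by
    have := heC v; simp [hc₀]; omega
  have hsupp₀ : (Finset.univ.filter fun v => 1 ≤ c₀ v).card = s := by
    have : (Finset.univ.filter fun v => 1 ≤ c₀ v) =
        (Finset.univ.filter fun v => 1 ≤ c v) := by
      ext v
      simp only [Finset.mem_filter, Finset.mem_univ, true_and, hc₀]
      constructor
      · intro h; have := heC v; omega
      · intro h; have : e v ≤ c v - 1 := he v; omega
    rw [this]; exact hs
  have hsum₀ : π₂ ≤ ∑ v, c₀ v := by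
    have h1 : ∑ v, (c₀ v + e v) = N :=
      Finset.sum_congr rfl fun v _ => hsplit v
    rw [Finset.sum_add_distrib] at h1
    omega
  have h2solv : NSolvable G c₀ r 2 := hπ2mem r c₀ hsum₀ hsupp₀
  have hqsolv : NSolvable G e r q := q_solvable G hπmem q e r hesum
  have h3 := nsolvable_add G h2solv hqsolv
  have heq : (fun u => c₀ u + e u) = c := funext hsplit
  rw [heq] at h3
  exact h3
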